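/- For the pure-step scattering data ã(k) = (1/2)( ((k−ic)/(k+ic))^{1/4} + ((k+ic)/(k−ic))^{1/4} ) with c > 0, cut along [−ic, ic] and branch fixed by ã(k) → 1 as k → ∞, one has ã(k) ≠ 0 for all k in the upper half-plane off the cut, and ã(k) = (1/2)(2ic/(k−ic))^{1/4}(1 + O(√(k−ic))) as k → ic; in particular the constant h* in the expansion a(k) = (h*/2)(2ic/(k−ic))^{1/4}(1 + O(√((k−ic)/i))) equals 1. -/

import Mathlib

open Complex Filter Asymptotics Topology

lemma cpow_quarter_re_pos {w : ℂ} (hw : w ≠ 0) (hπ : w.arg ≠ Real.pi) :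
    0 < (w ^ ((1 : ℂ)/4)).re := by
  rw [Complex.cpow_def_of_ne_zero hw, Complex.exp_re]
  apply mul_pos (Real.exp_pos _)
  apply Real.cos_pos_of_mem_Ioo
  have h1 : (Complex.log w * ((1:ℂ)/4)).im = w.arg / 4 := by
    rw [show ((1:ℂ)/4) = (((1:ℝ)/4 : ℝ) : ℂ) by norm_num, Complex.mul_im]
    simp [Complex.log_im]
    ring
  rw [h1]
  have h2 := Complex.neg_pi_lt_arg w
  have h3 := lt_of_le_of_ne (Complex.arg_le_pi w) hπ
  have h4 := Real.pi_pos
  exact Set.mem_Ioo.mpr ⟨by nlinarith, by nlinarith⟩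

lemma cpow_split {v : ℂ} (hv : v ≠ 0) (hπ : v.arg ≠ Real.pi) :
    ((1 + v)/v) ^ ((1:ℂ)/4) * v ^ ((1:ℂ)/4) = (1 + v) ^ ((1:ℂ)/4) := by
  have h1v : 1 + v ≠ 0 := by
    intro h
    apply hπ
    have hveq : v = -1 := by linear_combination h
    rw [hveq]
    simpa using Complex.arg_ofReal_of_neg (by norm_num : (-1:ℝ) < 0)
  have hx : (1 + v)/v ≠ 0 := div_ne_zero h1v hv
  have hxy : (1 + v)/v * v = 1 + v := div_mul_cancel₀ _ hv
  have harg : ((1 + v)/v).arg + v.arg ∈ Set.Ioc (-Real.pi) Real.pi := by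
    have hxv : ((1+v)/v) = 1 + v⁻¹ := by field_simp; ring
    have him : ((1+v)/v).im = -v.im / Complex.normSq v := by
      rw [hxv]; simp [Complex.inv_im]
    have hpi := Real.pi_pos
    rcases lt_trichotomy v.im 0 with h | h | h
    · have ha1 : v.arg < 0 := Complex.arg_neg_iff.mpr h
      have ha2 : -Real.pi < v.arg := Complex.neg_pi_lt_arg v
      have hb1 : 0 ≤ ((1+v)/v).arg := by
        apply Complex.arg_nonneg_iff.mpr
        rw [him]
        exact div_nonneg (by linarith) (Complex.normSq_nonneg v)
      have hb2 := Complex.arg_le_pi ((1+v)/v)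
      exact Set.mem_Ioc.mpr ⟨by linarith, by linarith⟩
    · have hvre : 0 < v.re := by
        rcases lt_trichotomy v.re 0 with h' | h' | h'
        · exact absurd (Complex.arg_eq_pi_iff.mpr ⟨h', h⟩) hπ
        · exact absurd (Complex.ext (by simpa using h') (by simpa using h) : v = 0) hv
        · exact h'
      have hveq : v = (v.re : ℂ) := Complex.ext (by simp) (by simp [h])
      have ha : v.arg = 0 := by rw [hveq]; exact Complex.arg_ofReal_of_nonneg hvre.le
      have hb : ((1+v)/v).arg = 0 := by
        rw [hveq, show ((1:ℂ) + (v.re:ℂ))/(v.re:ℂ) = (((1+v.re)/v.re : ℝ) : ℂ) by push_cast; ring]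
        exact Complex.arg_ofReal_of_nonneg (by positivity)
      exact Set.mem_Ioc.mpr ⟨by rw [ha, hb]; linarith, by rw [ha, hb]; linarith⟩
    · have ha1 : 0 ≤ v.arg := Complex.arg_nonneg_iff.mpr h.le
      have ha2 : v.arg ≤ Real.pi := Complex.arg_le_pi v
      have hb1 : ((1+v)/v).arg < 0 := by
        apply Complex.arg_neg_iff.mpr
        rw [him]
        apply div_neg_of_neg_of_pos (by linarith) (Complex.normSq_pos.mpr hv)
      have hb2 : -Real.pi < ((1+v)/v).arg := Complex.neg_pi_lt_arg _
      exact Set.mem_Ioc.mpr ⟨by linarith, by linarith⟩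
  have hlog := Complex.log_mul hx hv harg
  rw [hxy] at hlog
  rw [Complex.cpow_def_of_ne_zero hx, Complex.cpow_def_of_ne_zero hv,
    Complex.cpow_def_of_ne_zero h1v, ← Complex.exp_add, hlog]
  ring_nf

/-- The pure-step transmission-related coefficient
`ã(k) = (1/2)( ((k-ic)/(k+ic))^{1/4} + ((k+ic)/(k-ic))^{1/4} )`, with cut along `[-ic, ic]`
and branch fixed by `ã(k) → 1` as `k → ∞`. -/
noncomputable def aTilde (c : ℝ) (k : ℂ) : ℂ :=
  (1 / 2) * (((k - Complex.I * c) / (k + Complex.I * c)) ^ ((1 : ℂ) / 4)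
    + ((k + Complex.I * c) / (k - Complex.I * c)) ^ ((1 : ℂ) / 4))

/-- `ã(k) ≠ 0` in the upper half-plane off the cut, and near `k = ic` one has
`ã(k) = (1/2)(2ic/(k-ic))^{1/4}(1 + O(√(k-ic)))`; in particular the constant `h*` in
`a(k) = (h*/2)(2ic/(k-ic))^{1/4}(1 + O(√((k-ic)/i)))` equals `1` for the pure step. -/
theorem aTilde_nonvanishing_and_singularity (c : ℝ) (hc : 0 < c) :
    (∀ k : ℂ, 0 < k.im → ¬(k.re = 0 ∧ k.im ≤ c) → aTilde c k ≠ 0) ∧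
    (fun k : ℂ =>
        2 * aTilde c k * ((k - Complex.I * c) / (2 * Complex.I * c)) ^ ((1 : ℂ) / 4) - 1)
      =O[nhdsWithin (Complex.I * c) {k : ℂ | ¬(k.re = 0 ∧ |k.im| ≤ c)}]
        fun k : ℂ => ‖k - Complex.I * c‖ ^ ((1 : ℝ) / 2) := by
  constructor
  ·
    intro k hk hcut
    have hden : k + Complex.I * c ≠ 0 := by
      intro h
      have := congrArg Complex.im h
      simp at this
      linarith
    have hnum : k - Complex.I * c ≠ 0 := by
      intro h
      apply hcut
      have hre := congrArg Complex.re h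
      have him := congrArg Complex.im h
      simp at hre him
      constructor
      · linarith [hre]
      · linarith [him]
    have key : ∀ r : ℝ, r ≤ 0 → (k - Complex.I * c)/(k + Complex.I * c) ≠ (r : ℂ) := by
      intro r hr he
      have h1 : k - Complex.I * c = r * (k + Complex.I * c) := (div_eq_iff hden).mp he
      have h2 : k * (1 - (r:ℂ)) = Complex.I * c * (1 + r) := by linear_combination h1
      have hre := congrArg Complex.re h2
      have him := congrArg Complex.im h2
      simp [Complex.mul_re, Complex.mul_im] at hre him
      apply hcut
      have hrne : (0:ℝ) < 1 - r := by linarith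
      constructor
      · rcases hre with h | h
        · exact h
        · linarith
      · nlinarith [him]
    set w := (k - Complex.I * c)/(k + Complex.I * c) with hw
    have hw0 : w ≠ 0 := div_ne_zero hnum hden
    have hwπ : w.arg ≠ Real.pi := by
      intro h
      obtain ⟨h1, h2⟩ := Complex.arg_eq_pi_iff.mp h
      exact key w.re h1.le (Complex.ext (by simp) (by simp [h2]))
    have hw' : (k + Complex.I * c)/(k - Complex.I * c) = w⁻¹ := by
      rw [hw, inv_div]
    have hw'0 : (k + Complex.I * c)/(k - Complex.I * c) ≠ 0 := div_ne_zero hden hnum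
    have hw'π : ((k + Complex.I * c)/(k - Complex.I * c)).arg ≠ Real.pi := by
      intro h
      obtain ⟨h1, h2⟩ := Complex.arg_eq_pi_iff.mp h
      set w' := (k + Complex.I * c)/(k - Complex.I * c) with hww
      have hw'eq : w' = ((w'.re : ℝ) : ℂ) := Complex.ext (by simp) (by simp [h2])
      have : w = ((w'.re⁻¹ : ℝ) : ℂ) := by
        rw [Complex.ofReal_inv, ← hw'eq, hw', inv_inv]
      exact key w'.re⁻¹ (inv_nonpos.mpr h1.le) this
    have hA := cpow_quarter_re_pos hw0 hwπ
    have hB := cpow_quarter_re_pos hw'0 hw'π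
    have hpos : 0 < (aTilde c k).re := by
      have : (aTilde c k).re = 1/2 * ((w ^ ((1:ℂ)/4)).re
          + (((k + Complex.I * c)/(k - Complex.I * c)) ^ ((1:ℂ)/4)).re) := by
        rw [aTilde, Complex.mul_re]
        norm_num
        rfl
      rw [this]
      linarith
    intro h
    rw [h] at hpos
    simp at hpos
  ·
    set l := nhdsWithin (Complex.I * (c:ℂ)) {k : ℂ | ¬(k.re = 0 ∧ |k.im| ≤ c)} with hl
    set v : ℂ → ℂ := fun k => (k - Complex.I * c) / (2 * Complex.I * c) with hv
    have h2ic : (2 * Complex.I * (c:ℂ)) ≠ 0 := by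
      simp [Complex.I_ne_zero, Complex.ofReal_ne_zero, hc.ne']
    have hvcont : Tendsto v l (𝓝 0) := by
      have hca : ContinuousAt v (Complex.I * c) :=
        (continuousAt_id.sub continuousAt_const).div_const _
      have h0 : v (Complex.I * c) = 0 := by simp [hv]
      exact h0 ▸ hca.continuousWithinAt
    have hsmall : ∀ᶠ k in l, ‖v k‖ < 1/2 := by
      have := hvcont (Metric.ball_mem_nhds 0 (by norm_num : (0:ℝ) < 1/2))
      filter_upwards [this] with k hk
      simpa [Complex.dist_eq] using hk
    have hmem : ∀ᶠ k in l, ¬(k.re = 0 ∧ |k.im| ≤ c) := eventually_mem_nhdsWithin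
    -- basic pointwise consequences
    have hkey : ∀ k : ℂ, ¬(k.re = 0 ∧ |k.im| ≤ c) → ‖v k‖ < 1/2 →
        v k ≠ 0 ∧ (v k).arg ≠ Real.pi ∧ k - Complex.I * c ≠ 0 ∧ k + Complex.I * c ≠ 0 := by
      intro k hk1 hk2
      have hvne : v k ≠ 0 := by
        intro h
        apply hk1
        have hk : k = Complex.I * c := by
          have := (div_eq_zero_iff.mp h).resolve_right h2ic
          linear_combination this
        rw [hk]
        norm_num [abs_of_pos hc]
      have hveq : k - Complex.I * c = 2 * Complex.I * c * v k := by
        rw [hv]; field_simp [Complex.ofReal_ne_zero.mpr hc.ne']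
      have hkm : k - Complex.I * c ≠ 0 := by
        intro h
        exact hvne (by rw [hv]; simp only [h, zero_div])
      have hkp : k + Complex.I * c ≠ 0 := by
        have h1 : k + Complex.I * c = 2 * Complex.I * c * (v k + 1) := by
          linear_combination hveq
        rw [h1]
        apply mul_ne_zero h2ic
        intro h
        have : v k = -1 := by linear_combination h
        rw [this] at hk2
        norm_num at hk2
      refine ⟨hvne, ?_, hkm, hkp⟩
      intro h
      obtain ⟨h1, h2⟩ := Complex.arg_eq_pi_iff.mp h
      set r := (v k).re with hr
      have hvr : v k = (r : ℂ) := Complex.ext (by simp [hr]) (by simp [h2])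
      have hrabs : |r| < 1/2 := by
        calc |r| ≤ ‖v k‖ := Complex.abs_re_le_norm _
        _ < 1/2 := hk2
      have hkeq : k = Complex.I * c + 2 * Complex.I * c * (r : ℂ) := by
        rw [← hvr]; linear_combination hveq
      apply hk1
      have hkre : k.re = 0 := by
        rw [hkeq]; simp [Complex.mul_re, Complex.mul_im]
      have hkim : k.im = c * (1 + 2 * r) := by
        rw [hkeq]; simp [Complex.mul_re, Complex.mul_im]; ring
      refine ⟨hkre, ?_⟩
      rw [hkim, abs_le]
      rw [abs_lt] at hrabs
      constructor <;> nlinarith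
    -- the eventual identity
    have heq : (fun k : ℂ => 2 * aTilde c k * (v k) ^ ((1:ℂ)/4) - 1) =ᶠ[l]
        (fun k : ℂ => ((k - Complex.I * c)/(k + Complex.I * c)) ^ ((1:ℂ)/4) * (v k) ^ ((1:ℂ)/4)
          + ((1 + v k) ^ ((1:ℂ)/4) - 1)) := by
      filter_upwards [hmem, hsmall] with k hk1 hk2
      obtain ⟨hvne, hvπ, hkm, hkp⟩ := hkey k hk1 hk2
      have hB : (k + Complex.I * c)/(k - Complex.I * c) = (1 + v k)/(v k) := by
        rw [hv]
        field_simp [Complex.ofReal_ne_zero.mpr hc.ne']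
        ring
      have : 2 * aTilde c k * (v k) ^ ((1:ℂ)/4) - 1
          = ((k - Complex.I * c)/(k + Complex.I * c)) ^ ((1:ℂ)/4) * (v k) ^ ((1:ℂ)/4)
            + ((k + Complex.I * c)/(k - Complex.I * c)) ^ ((1:ℂ)/4) * (v k) ^ ((1:ℂ)/4) - 1 := by
        rw [aTilde]; ring
      rw [this, hB, cpow_split hvne hvπ]
      ring
    -- bound on the first term
    have hO1 : (fun k : ℂ => ((k - Complex.I * c)/(k + Complex.I * c)) ^ ((1:ℂ)/4)
          * (v k) ^ ((1:ℂ)/4)) =O[l]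
        (fun k : ℂ => ‖k - Complex.I * c‖ ^ ((1:ℝ)/2)) := by
      apply IsBigO.of_bound ((2:ℝ) ^ ((1:ℝ)/4) / (2*c) ^ ((1:ℝ)/2))
      filter_upwards [hmem, hsmall] with k hk1 hk2
      obtain ⟨hvne, hvπ, hkm, hkp⟩ := hkey k hk1 hk2
      set x := ‖v k‖ with hxdef
      set u := ‖k - Complex.I * c‖ with hudef
      have hxpos : 0 < x := norm_pos_iff.mpr hvne
      have habs2 : ‖(2*Complex.I*(c:ℂ))‖ = 2*c := by
        rw [show (2*Complex.I*(c:ℂ)) = ((2*c : ℝ):ℂ)*Complex.I by push_cast; ring,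
          norm_mul, Complex.norm_real, Complex.norm_I, mul_one, Real.norm_of_nonneg (by positivity)]
      have hxu : x = u / (2*c) := by
        rw [hxdef, hudef, hv]
        simp only [norm_div, habs2]
      have h1veq : (1:ℂ) + v k = (k + Complex.I*c)/(2*Complex.I*c) := by
        rw [hv, eq_div_iff h2ic]
        field_simp [Complex.I_ne_zero, Complex.ofReal_ne_zero.mpr hc.ne']
        ring
      have h1vne : (1:ℂ) + v k ≠ 0 := by rw [h1veq]; exact div_ne_zero hkp h2ic
      have hA : (k - Complex.I * c)/(k + Complex.I * c) = (v k)/(1 + v k) := by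
        rw [div_eq_div_iff hkp h1vne, hv, h1veq]
        field_simp [Complex.I_ne_zero, Complex.ofReal_ne_zero.mpr hc.ne']
      have h1v : (1:ℝ)/2 ≤ ‖1 + v k‖ := by
        have h : ‖(1:ℂ)‖ ≤ ‖1 + v k‖ + ‖v k‖ := by
          calc ‖(1:ℂ)‖ = ‖(1 + v k) + (-(v k))‖ := by ring_nf
          _ ≤ ‖1 + v k‖ + ‖-(v k)‖ := norm_add_le _ _
          _ = ‖1 + v k‖ + ‖v k‖ := by rw [norm_neg]
        rw [norm_one] at h
        linarith
      have habsA : ‖(k - Complex.I * c)/(k + Complex.I * c)‖ ≤ 2 * x := by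
        rw [hA, norm_div]
        rw [div_le_iff₀ (lt_of_lt_of_le (by norm_num) h1v)]
        nlinarith
      have hq : ((1:ℂ)/4) = (((1:ℝ)/4 : ℝ) : ℂ) := by norm_num
      calc ‖((k - Complex.I * c)/(k + Complex.I * c)) ^ ((1:ℂ)/4) * (v k) ^ ((1:ℂ)/4)‖
          = ‖((k - Complex.I * c)/(k + Complex.I * c)) ^ ((1:ℂ)/4)‖
            * ‖(v k) ^ ((1:ℂ)/4)‖ := by
            simp [norm_mul]
        _ = ‖(k - Complex.I * c)/(k + Complex.I * c)‖ ^ ((1:ℝ)/4)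
            * x ^ ((1:ℝ)/4) := by
            rw [hq, Complex.norm_cpow_real, Complex.norm_cpow_real]
        _ ≤ (2*x) ^ ((1:ℝ)/4) * x ^ ((1:ℝ)/4) := by
            apply mul_le_mul_of_nonneg_right _ (Real.rpow_nonneg (norm_nonneg _) _)
            exact Real.rpow_le_rpow (norm_nonneg _) habsA (by norm_num)
        _ = (2:ℝ) ^ ((1:ℝ)/4) * (x ^ ((1:ℝ)/4) * x ^ ((1:ℝ)/4)) := by
            rw [Real.mul_rpow (by norm_num) (le_of_lt hxpos)]; ring
        _ = (2:ℝ) ^ ((1:ℝ)/4) * x ^ ((1:ℝ)/2) := by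
            rw [← Real.rpow_add hxpos]; norm_num
        _ = (2:ℝ) ^ ((1:ℝ)/4) * (u ^ ((1:ℝ)/2) / (2*c) ^ ((1:ℝ)/2)) := by
            rw [hxu, Real.div_rpow (norm_nonneg _) (by positivity)]
        _ = (2:ℝ) ^ ((1:ℝ)/4) / (2*c) ^ ((1:ℝ)/2) * ‖u ^ ((1:ℝ)/2)‖ := by
            rw [Real.norm_eq_abs, _root_.abs_of_nonneg (Real.rpow_nonneg (norm_nonneg _) _)]
            ring
    -- bound on the second term
    have hd : HasDerivAt (fun z : ℂ => z ^ ((1:ℂ)/4)) (((1:ℂ)/4) * 1 ^ (((1:ℂ)/4) - 1)) 1 :=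
      (Complex.hasStrictDerivAt_cpow_const (Complex.one_mem_slitPlane)).hasDerivAt
    have hOd : (fun z : ℂ => z ^ ((1:ℂ)/4) - 1) =O[𝓝 1] (fun z : ℂ => z - 1) := by
      have := hd.isBigO_sub
      simpa [Complex.one_cpow] using this
    have htend : Tendsto (fun k : ℂ => 1 + v k) l (𝓝 1) := by
      have := (tendsto_const_nhds : Tendsto (fun _ : ℂ => (1:ℂ)) l (𝓝 1)).add hvcont
      simpa using this
    have hO2 : (fun k : ℂ => (1 + v k) ^ ((1:ℂ)/4) - 1) =O[l] v := by
      have := hOd.comp_tendsto htend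
      exact this.congr (fun k => rfl) (fun k => by simp)
    have hvO : v =O[l] (fun k : ℂ => ‖k - Complex.I * c‖ ^ ((1:ℝ)/2)) := by
      apply IsBigO.of_bound ((2*c)⁻¹)
      have huev : ∀ᶠ k in l, ‖k - Complex.I * c‖ ≤ 1 := by
        have hcc : Tendsto (fun k : ℂ => k - Complex.I * c) l (𝓝 0) := by
          have hca : ContinuousAt (fun k : ℂ => k - Complex.I * c) (Complex.I * c) :=
            continuousAt_id.sub continuousAt_const
          have h0 : (fun k : ℂ => k - Complex.I * c) (Complex.I * c) = 0 := by simp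
          exact h0 ▸ hca.continuousWithinAt
        have := hcc (Metric.closedBall_mem_nhds 0 (by norm_num : (0:ℝ) < 1))
        filter_upwards [this] with k hk
        simpa [Complex.dist_eq] using hk
      filter_upwards [hmem, hsmall, huev] with k hk1 hk2 hk3
      obtain ⟨hvne, hvπ, hkm, hkp⟩ := hkey k hk1 hk2
      set u := ‖k - Complex.I * c‖ with hudef
      have hupos : 0 < u := norm_pos_iff.mpr hkm
      have hule : u ≤ u ^ ((1:ℝ)/2) := by
        calc u = u ^ (1:ℝ) := (Real.rpow_one u).symm
        _ ≤ u ^ ((1:ℝ)/2) := Real.rpow_le_rpow_of_exponent_ge hupos hk3 (by norm_num)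
      have habs2 : ‖(2*Complex.I*(c:ℂ))‖ = 2*c := by
        rw [show (2*Complex.I*(c:ℂ)) = ((2*c : ℝ):ℂ)*Complex.I by push_cast; ring,
          norm_mul, Complex.norm_real, Complex.norm_I, mul_one, Real.norm_of_nonneg (by positivity)]
      have hnv : ‖v k‖ = u / (2*c) := by
        rw [hv]
        simp only [norm_div, habs2, hudef]
      rw [hnv, Real.norm_eq_abs, _root_.abs_of_nonneg (Real.rpow_nonneg (norm_nonneg _) _)]
      rw [div_eq_inv_mul]
      apply mul_le_mul_of_nonneg_left _ (by positivity)
      exact hule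
    exact heq.trans_isBigO (hO1.add (hO2.trans hvO))
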